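/- Let f_n(x,y,p_n,q_n,u_{n-1},u_n,u_{n+1}) be continuously differentiable and φ_n(x,y,u_n), ξ_n(x,y,u_n), η_n(x,y,u_n) (n ∈ ℤ) be twice continuously differentiable real functions satisfying the determining equation for Lie point symmetries of the Toda field-type equation identically. Then for all n ∈ ℤ and all real values of the jet variables the following four relations hold pointwise: (ξ_{n-1}(x,y,u_{n-1}) − ξ_n(x,y,u_n))·∂f_n/∂u_{n-1} = 0, (η_{n-1}(x,y,u_{n-1}) − η_n(x,y,u_n))·∂f_n/∂u_{n-1} = 0, (ξ_{n+1}(x,y,u_{n+1}) − ξ_n(x,y,u_n))·∂f_n/∂u_{n+1} = 0, and (η_{n+1}(x,y,u_{n+1}) − η_n(x,y,u_n))·∂f_n/∂u_{n+1} = 0, where ∂f_n/∂u_{n±1} is evaluated at (x,y,p_n,q_n,u_{n-1},u_n,u_{n+1}). -/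
import Mathlib


/-- The determining equation for Lie point symmetries of the Toda field-type equation
`u_{n,xy} = fₙ(x, y, u_{n,x}, u_{n,y}, uₙ₋₁, uₙ, uₙ₊₁)`, with point symmetry
`ψₙ = φₙ(x,y,uₙ) − ξₙ(x,y,uₙ) pₙ − ηₙ(x,y,uₙ) qₙ` (where `p, q, r, s` stand for the
jet variables `u_x, u_y, u_{xx}, u_{yy}`).  It expresses
`Σₖ (∂fₙ/∂uₙ₊ₖ) ψₙ₊ₖ + (∂fₙ/∂pₙ) Dₓψₙ + (∂fₙ/∂qₙ) D_yψₙ − DₓD_yψₙ = 0`,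
with `Dₓ`, `D_y` the formal total derivatives substituted on solutions
(`Dₓqₙ = D_ypₙ = fₙ`, `Dₓpₙ = rₙ`, `D_yqₙ = sₙ`), required to hold identically in the
independent jet variables `x, y, uₙ₋₁ = a, uₙ = b, uₙ₊₁ = c, pₙ₋₁, pₙ, pₙ₊₁, qₙ₋₁, qₙ,
qₙ₊₁, rₙ, sₙ`.  The arguments of `f n` are `(x, y, p_n, q_n, u_{n-1}, u_n, u_{n+1})`. -/
def TodaFieldDetEq (f : ℤ → ℝ → ℝ → ℝ → ℝ → ℝ → ℝ → ℝ → ℝ)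
    (φ ξ η : ℤ → ℝ → ℝ → ℝ → ℝ) : Prop :=
  ∀ (n : ℤ) (x y a b c pm p0 pp qm q0 qp r s : ℝ),
    -- the right-hand side of the equation and its partial derivatives at the point
    let F := f n x y p0 q0 a b c
    let fx := deriv (fun z => f n z y p0 q0 a b c) x
    let fy := deriv (fun z => f n x z p0 q0 a b c) y
    let fp := deriv (fun z => f n x y z q0 a b c) p0
    let fq := deriv (fun z => f n x y p0 z a b c) q0
    let fa := deriv (fun z => f n x y p0 q0 z b c) a
    let fb := deriv (fun z => f n x y p0 q0 a z c) b
    let fc := deriv (fun z => f n x y p0 q0 a b z) c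
    -- first and second partial derivatives of φₙ, ξₙ, ηₙ at (x, y, uₙ)
    let φx := deriv (fun z => φ n z y b) x
    let φy := deriv (fun z => φ n x z b) y
    let φu := deriv (fun z => φ n x y z) b
    let φxy := deriv (fun z => deriv (fun w => φ n z w b) y) x
    let φxu := deriv (fun z => deriv (fun w => φ n z y w) b) x
    let φyu := deriv (fun z => deriv (fun w => φ n x z w) b) y
    let φuu := deriv (deriv (fun w => φ n x y w)) b
    let ξx := deriv (fun z => ξ n z y b) x
    let ξy := deriv (fun z => ξ n x z b) y
    let ξu := deriv (fun z => ξ n x y z) b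
    let ξxy := deriv (fun z => deriv (fun w => ξ n z w b) y) x
    let ξxu := deriv (fun z => deriv (fun w => ξ n z y w) b) x
    let ξyu := deriv (fun z => deriv (fun w => ξ n x z w) b) y
    let ξuu := deriv (deriv (fun w => ξ n x y w)) b
    let ηx := deriv (fun z => η n z y b) x
    let ηy := deriv (fun z => η n x z b) y
    let ηu := deriv (fun z => η n x y z) b
    let ηxy := deriv (fun z => deriv (fun w => η n z w b) y) x
    let ηxu := deriv (fun z => deriv (fun w => η n z y w) b) x
    let ηyu := deriv (fun z => deriv (fun w => η n x z w) b) y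
    let ηuu := deriv (deriv (fun w => η n x y w)) b
    -- the symmetry characteristics ψₙ₋₁, ψₙ, ψₙ₊₁
    let ψm := φ (n - 1) x y a - ξ (n - 1) x y a * pm - η (n - 1) x y a * qm
    let ψ0 := φ n x y b - ξ n x y b * p0 - η n x y b * q0
    let ψp := φ (n + 1) x y c - ξ (n + 1) x y c * pp - η (n + 1) x y c * qp
    -- total derivatives of fₙ on solutions
    let DxF := fx + (fa * pm + fb * p0 + fc * pp) + fp * r + fq * F
    let DyF := fy + (fa * qm + fb * q0 + fc * qp) + fp * F + fq * s
    -- total derivatives of ψₙ on solutions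
    let Dxψ := φx + φu * p0 - ((ξx + ξu * p0) * p0 + ξ n x y b * r) -
      ((ηx + ηu * p0) * q0 + η n x y b * F)
    let Dyψ := φy + φu * q0 - ((ξy + ξu * q0) * p0 + ξ n x y b * F) -
      ((ηy + ηu * q0) * q0 + η n x y b * s)
    let DxDyψ := (φxy + φyu * p0 + (φxu + φuu * p0) * q0 + φu * F) -
      ((ξxy + ξyu * p0 + (ξxu + ξuu * p0) * q0 + ξu * F) * p0 + (ξy + ξu * q0) * r) -
      ((ξx + ξu * p0) * F + ξ n x y b * DxF) -
      ((ηxy + ηyu * p0 + (ηxu + ηuu * p0) * q0 + ηu * F) * q0 + (ηy + ηu * q0) * F) -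
      ((ηx + ηu * p0) * s + η n x y b * DyF)
    fa * ψm + fb * ψ0 + fc * ψp + fp * Dxψ + fq * Dyψ - DxDyψ = 0


/-- Eq. (3.22): for a Toda field-type equation
`u_{n,xy} = fₙ(x,y,u_{n,x},u_{n,y},uₙ₋₁,uₙ,uₙ₊₁)`, setting the coefficients of
`uₙ₋₁,ₓ`, `uₙ₋₁,_y`, `uₙ₊₁,ₓ`, `uₙ₊₁,_y` in the determining equation to zero yields the
four pointwise relations `(ξₙ₋₁ − ξₙ) f_{n,uₙ₋₁} = 0`, `(ηₙ₋₁ − ηₙ) f_{n,uₙ₋₁} = 0`,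
`(ξₙ₊₁ − ξₙ) f_{n,uₙ₊₁} = 0`, `(ηₙ₊₁ − ηₙ) f_{n,uₙ₊₁} = 0`. -/
theorem todaField_xi_eta_relations
    (f : ℤ → ℝ → ℝ → ℝ → ℝ → ℝ → ℝ → ℝ → ℝ) (φ ξ η : ℤ → ℝ → ℝ → ℝ → ℝ)
    (hf : ∀ n, ContDiff ℝ 1 (fun p : ℝ × ℝ × ℝ × ℝ × ℝ × ℝ × ℝ =>
      f n p.1 p.2.1 p.2.2.1 p.2.2.2.1 p.2.2.2.2.1 p.2.2.2.2.2.1 p.2.2.2.2.2.2))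
    (hφ : ∀ n, ContDiff ℝ 2 (fun p : ℝ × ℝ × ℝ => φ n p.1 p.2.1 p.2.2))
    (hξ : ∀ n, ContDiff ℝ 2 (fun p : ℝ × ℝ × ℝ => ξ n p.1 p.2.1 p.2.2))
    (hη : ∀ n, ContDiff ℝ 2 (fun p : ℝ × ℝ × ℝ => η n p.1 p.2.1 p.2.2))
    (hdet : TodaFieldDetEq f φ ξ η) :
    ∀ (n : ℤ) (x y p q a b c : ℝ),
      (ξ (n - 1) x y a - ξ n x y b) * deriv (fun z => f n x y p q z b c) a = 0 ∧
      (η (n - 1) x y a - η n x y b) * deriv (fun z => f n x y p q z b c) a = 0 ∧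
      (ξ (n + 1) x y c - ξ n x y b) * deriv (fun z => f n x y p q a b z) c = 0 ∧
      (η (n + 1) x y c - η n x y b) * deriv (fun z => f n x y p q a b z) c = 0 := by
  intro n x y p q a b c
  have h00 := hdet n x y a b c 0 p 0 0 q 0 0 0
  have h10 := hdet n x y a b c 1 p 0 0 q 0 0 0
  have h01 := hdet n x y a b c 0 p 1 0 q 0 0 0
  have hq10 := hdet n x y a b c 0 p 0 1 q 0 0 0
  have hq01 := hdet n x y a b c 0 p 0 0 q 1 0 0
  simp only [] at h00 h10 h01 hq10 hq01
  refine ⟨?_, ?_, ?_, ?_⟩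
  · linear_combination h00 - h10
  · linear_combination h00 - hq10
  · linear_combination h00 - h01
  · linear_combination h00 - hq01
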